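/- Let q = 2^h and let T be the alternating trilinear form on V = GF(q)^7 with trivector t = f_{124} + f_{235} + f_{346} + f_{457} + f_{561} + f_{672} + f_{713}. Then every T-singular line of PG(6,q) lies in the hyperplane with equation x₁ + x₂ + ⋯ + x₇ = 0; that is, if span{a,b} is a T-singular line, then Σᵢ aᵢ = 0 and Σᵢ bᵢ = 0. -/

import Mathlib

def bigL : List (Fin 7 × Fin 7 × Fin 7) := [(0, 1, 3), (0, 3, 1), (1, 0, 3), (1, 3, 0), (3, 0, 1), (3, 1, 0), (1, 2, 4), (1, 4, 2), (2, 1, 4), (2, 4, 1), (4, 1, 2), (4, 2, 1), (2, 3, 5), (2, 5, 3), (3, 2, 5), (3, 5, 2), (5, 2, 3), (5, 3, 2), (3, 4, 6), (3, 6, 4), (4, 3, 6), (4, 6, 3), (6, 3, 4), (6, 4, 3), (0, 4, 5), (0, 5, 4), (4, 0, 5), (4, 5, 0), (5, 0, 4), (5, 4, 0), (1, 5, 6), (1, 6, 5), (5, 1, 6), (5, 6, 1), (6, 1, 5), (6, 5, 1), (0, 2, 6), (0, 6, 2), (2, 0, 6), (2, 6, 0), (6, 0, 2), (6, 2, 0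)]

set_option maxHeartbeats 2000000

/-- Over `GF(2^h)`, for the form on `F⁷` with trivector
`t = f₁₂₄ + f₂₃₅ + f₃₄₆ + f₄₅₇ + f₅₆₁ + f₆₇₂ + f₇₁₃`, every `T`-singular line
lies in the hyperplane `x₁ + ⋯ + x₇ = 0`. (0-based indices.) -/
theorem stmt_17 (h : ℕ) (hpos : 0 < h) (F : Type*) [Field F] [Fintype F]
    (hcard : Fintype.card F = 2 ^ h)
    (T : AlternatingMap F (Fin 7 → F) F (Fin 3))
    (hT : ∀ i j k : Fin 7, i < j → j < k →
      T ![Pi.single i 1, Pi.single j 1, Pi.single k 1] =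
        if ((i : ℕ), (j : ℕ), (k : ℕ)) ∈
            [((0:ℕ), (1:ℕ), (3:ℕ)), (1, 2, 4), (2, 3, 5), (3, 4, 6),
              (0, 4, 5), (1, 5, 6), (0, 2, 6)] then 1 else 0) :
    ∀ a b : Fin 7 → F, LinearIndependent F ![a, b] →
      (∀ x, T ![a, b, x] = 0) →
        (∑ i, a i = 0 ∧ ∑ i, b i = 0) := by
  intro a b hind hsing
  -- characteristic 2
  have h2 : (2:F) = 0 := by
    have hp : (ringChar F).Prime := CharP.char_is_prime F _
    haveI := Fact.mk hp
    obtain ⟨n, hpp, hn⟩ := FiniteField.card F (ringChar F)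
    rw [hcard] at hn
    have hdvd : ringChar F ∣ 2 ^ h := hn ▸ dvd_pow_self _ n.2.ne'
    have hrc : ringChar F = 2 := by
      rcases Nat.Prime.eq_one_or_self_of_dvd Nat.prime_two _ (hp.dvd_of_dvd_pow hdvd) with h' | h'
      · exact absurd h' hp.ne_one
      · exact h'
    haveI : CharP F 2 := hrc ▸ ringChar.charP F
    exact_mod_cast CharP.cast_eq_zero F 2
  have hneg : ∀ x : F, -x = x := fun x => by linear_combination -x * h2
  set e : Fin 7 → (Fin 7 → F) := fun k => Pi.single k 1 with he
  have upd0 : ∀ x y z w : Fin 7 → F, Function.update ![x, y, z] 0 w = ![w, y, z] := by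
    intro x y z w; funext j; fin_cases j <;> simp
  have upd1 : ∀ x y z w : Fin 7 → F, Function.update ![x, y, z] 1 w = ![x, w, z] := by
    intro x y z w; funext j; fin_cases j <;> simp
  have lin0 : ∀ y z v : Fin 7 → F, T ![v, y, z] = ∑ p, v p * T ![e p, y, z] := by
    intro y z v
    let L : (Fin 7 → F) →ₗ[F] F :=
      { toFun := fun x => T ![x, y, z],
        map_add' := fun x x' => by
          have hh := T.map_update_add ![x, y, z] 0 x x'
          rwa [upd0, upd0, upd0] at hh,
        map_smul' := fun r x => by
          have hh := T.map_update_smul ![x, y, z] 0 r x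
          rwa [upd0, upd0] at hh }
    have hv : v = ∑ p, v p • e p := by
      simp [he, ← Pi.single_smul, Finset.univ_sum_single]
    show L v = _
    conv_lhs => rw [hv]
    rw [map_sum]
    exact Finset.sum_congr rfl fun p _ => by rw [map_smul]; rfl
  have lin1 : ∀ x z v : Fin 7 → F, T ![x, v, z] = ∑ q, v q * T ![x, e q, z] := by
    intro x z v
    let L : (Fin 7 → F) →ₗ[F] F :=
      { toFun := fun y => T ![x, y, z],
        map_add' := fun y y' => by
          have hh := T.map_update_add ![x, y, z] 1 y y'
          rwa [upd1, upd1, upd1] at hh,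
        map_smul' := fun r y => by
          have hh := T.map_update_smul ![x, y, z] 1 r y
          rwa [upd1, upd1] at hh }
    have hv : v = ∑ q, v q • e q := by
      simp [he, ← Pi.single_smul, Finset.univ_sum_single]
    show L v = _
    conv_lhs => rw [hv]
    rw [map_sum]
    exact Finset.sum_congr rfl fun q _ => by rw [map_smul]; rfl
  have hexp : ∀ x : Fin 7 → F, T ![a, b, x] = ∑ p, ∑ q, a p * (b q * T ![e p, e q, x]) := by
    intro x
    rw [lin0 b x a]
    refine Finset.sum_congr rfl fun p _ => ?_
    rw [lin1 (e p) x b, Finset.mul_sum]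
  have swap01 : ∀ x y z : Fin 7 → F, T ![x, y, z] = T ![y, x, z] := by
    intro x y z
    have hs := T.map_swap ![y, x, z] (i := 0) (j := 1) (by decide)
    rw [show (![y, x, z] ∘ Equiv.swap (0:Fin 3) 1) = ![x, y, z] from by
      funext j; fin_cases j <;> simp [Equiv.swap_apply_of_ne_of_ne], hneg] at hs
    exact hs
  have swap12 : ∀ x y z : Fin 7 → F, T ![x, y, z] = T ![x, z, y] := by
    intro x y z
    have hs := T.map_swap ![x, z, y] (i := 1) (j := 2) (by decide)
    rw [show (![x, z, y] ∘ Equiv.swap (1:Fin 3) 2) = ![x, y, z] from by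
      funext j; fin_cases j <;> simp [Equiv.swap_apply_of_ne_of_ne], hneg] at hs
    exact hs
  have hiff : ∀ p q k : Fin 7, p < q → q < k →
      ((((p:ℕ), (q:ℕ), (k:ℕ)) ∈ [((0:ℕ), (1:ℕ), (3:ℕ)), (1, 2, 4), (2, 3, 5), (3, 4, 6),
        (0, 4, 5), (1, 5, 6), (0, 2, 6)]) ↔ (p, q, k) ∈ bigL) := by decide
  have mA : ∀ p q k : Fin 7, ((p, k, q) ∈ bigL ↔ (p, q, k) ∈ bigL) := by decide
  have mB : ∀ p q k : Fin 7, ((k, p, q) ∈ bigL ↔ (p, q, k) ∈ bigL) := by decide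
  have mC : ∀ p q k : Fin 7, ((q, p, k) ∈ bigL ↔ (p, q, k) ∈ bigL) := by decide
  have mD : ∀ p q k : Fin 7, ((q, k, p) ∈ bigL ↔ (p, q, k) ∈ bigL) := by decide
  have mE : ∀ p q k : Fin 7, ((k, q, p) ∈ bigL ↔ (p, q, k) ∈ bigL) := by decide
  have mdupa : ∀ p k : Fin 7, ¬((p, p, k) ∈ bigL) := by decide
  have mdupb : ∀ p k : Fin 7, ¬((p, k, k) ∈ bigL) := by decide
  have mdupc : ∀ p k : Fin 7, ¬((p, k, p) ∈ bigL) := by decide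
  have hsorted : ∀ p q k : Fin 7, p < q → q < k →
      T ![e p, e q, e k] = if (p, q, k) ∈ bigL then 1 else 0 := by
    intro p q k h1 h1'
    simp only [he]
    rw [hT p q k h1 h1']
    exact if_congr (hiff p q k h1 h1') rfl rfl
  have hE : ∀ p q k : Fin 7, T ![e p, e q, e k] = if (p, q, k) ∈ bigL then 1 else 0 := by
    intro p q k
    rcases eq_or_ne p q with rfl | hpq
    · rw [T.map_eq_zero_of_eq ![e p, e p, e k] (i := 0) (j := 1) rfl (by decide),
        if_neg (mdupa p k)]
    rcases eq_or_ne q k with rfl | hqk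
    · rw [T.map_eq_zero_of_eq ![e p, e q, e q] (i := 1) (j := 2) rfl (by decide),
        if_neg (mdupb p q)]
    rcases eq_or_ne p k with rfl | hpk
    · rw [T.map_eq_zero_of_eq ![e p, e q, e p] (i := 0) (j := 2) rfl (by decide),
        if_neg (mdupc p q)]
    rcases lt_trichotomy p q with h1 | h1 | h1
    · rcases lt_trichotomy q k with hq1 | hq1 | hq1
      · exact hsorted p q k h1 hq1
      · exact absurd hq1 hqk
      · rcases lt_trichotomy p k with hp1 | hp1 | hp1
        · rw [swap12, hsorted p k q hp1 hq1]
          exact if_congr (mA p q k) rfl rfl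
        · exact absurd hp1 hpk
        · rw [swap12, swap01, hsorted k p q hp1 h1]
          exact if_congr (mB p q k) rfl rfl
    · exact absurd h1 hpq
    · rcases lt_trichotomy p k with hp1 | hp1 | hp1
      · rw [swap01, hsorted q p k h1 hp1]
        exact if_congr (mC p q k) rfl rfl
      · exact absurd hp1 hpk
      · rcases lt_trichotomy q k with hq1 | hq1 | hq1
        · rw [swap01, swap12, hsorted q k p hq1 hp1]
          exact if_congr (mD p q k) rfl rfl
        · exact absurd hq1 hqk
        · rw [swap01, swap12, swap01, hsorted k q p hq1 h1]
          exact if_congr (mE p q k) rfl rfl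
  have hc : ∀ k, (∑ p, ∑ q, a p * (b q * (if (p, q, k) ∈ bigL then (1:F) else 0))) = 0 := by
    intro k
    have hh := hsing (e k)
    rw [hexp (e k)] at hh
    simp only [hE] at hh
    exact hh
  have hc0 : a 1 * b 3 + a 3 * b 1 + a 4 * b 5 + a 5 * b 4 + a 2 * b 6 + a 6 * b 2 = 0 := by
    have hh := hc 0
    simp only [Fin.sum_univ_seven] at hh
    simp (config := { decide := true }) only [if_true, if_false, mul_one, mul_zero,
      add_zero, zero_add] at hh
    linear_combination hh
  have hc1 : a 0 * b 3 + a 3 * b 0 + a 2 * b 4 + a 4 * b 2 + a 5 * b 6 + a 6 * b 5 = 0 := by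
    have hh := hc 1
    simp only [Fin.sum_univ_seven] at hh
    simp (config := { decide := true }) only [if_true, if_false, mul_one, mul_zero,
      add_zero, zero_add] at hh
    linear_combination hh
  have hc2 : a 1 * b 4 + a 4 * b 1 + a 3 * b 5 + a 5 * b 3 + a 0 * b 6 + a 6 * b 0 = 0 := by
    have hh := hc 2
    simp only [Fin.sum_univ_seven] at hh
    simp (config := { decide := true }) only [if_true, if_false, mul_one, mul_zero,
      add_zero, zero_add] at hh
    linear_combination hh
  have hc3 : a 0 * b 1 + a 1 * b 0 + a 2 * b 5 + a 5 * b 2 + a 4 * b 6 + a 6 * b 4 = 0 := by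
    have hh := hc 3
    simp only [Fin.sum_univ_seven] at hh
    simp (config := { decide := true }) only [if_true, if_false, mul_one, mul_zero,
      add_zero, zero_add] at hh
    linear_combination hh
  have hc4 : a 1 * b 2 + a 2 * b 1 + a 3 * b 6 + a 6 * b 3 + a 0 * b 5 + a 5 * b 0 = 0 := by
    have hh := hc 4
    simp only [Fin.sum_univ_seven] at hh
    simp (config := { decide := true }) only [if_true, if_false, mul_one, mul_zero,
      add_zero, zero_add] at hh
    linear_combination hh
  have hc5 : a 2 * b 3 + a 3 * b 2 + a 0 * b 4 + a 4 * b 0 + a 1 * b 6 + a 6 * b 1 = 0 := by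
    have hh := hc 5
    simp only [Fin.sum_univ_seven] at hh
    simp (config := { decide := true }) only [if_true, if_false, mul_one, mul_zero,
      add_zero, zero_add] at hh
    linear_combination hh
  have hc6 : a 3 * b 4 + a 4 * b 3 + a 1 * b 5 + a 5 * b 1 + a 0 * b 2 + a 2 * b 0 = 0 := by
    have hh := hc 6
    simp only [Fin.sum_univ_seven] at hh
    simp (config := { decide := true }) only [if_true, if_false, mul_one, mul_zero,
      add_zero, zero_add] at hh
    linear_combination hh
  have keyA0 : (a 0 * b 0 + a 1 * b 1 + a 2 * b 2 + a 3 * b 3 + a 4 * b 4 + a 5 * b 5 + a 6 * b 6) * a 0 + ((a 0 + a 1 + a 2 + a 3 + a 4 + a 5 + a 6) * (a 0 + a 1 + a 2 + a 3 + a 4 + a 5 + a 6)) * b 0 = 0 := by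
    linear_combination (a 3) * hc1 + (a 6) * hc2 + (a 1) * hc3 + (a 5) * hc4 + (a 4) * hc5 + (a 2) * hc6 + (a 0 * a 0 * b 0 + a 0 * a 1 * b 0 + a 0 * a 2 * b 0 + a 0 * a 3 * b 0 + a 0 * a 4 * b 0 + a 0 * a 5 * b 0 + a 0 * a 6 * b 0 + a 1 * a 2 * b 0 + (-1) * a 1 * a 2 * b 5 + a 1 * a 3 * b 0 + a 1 * a 4 * b 0 + (-1) * a 1 * a 4 * b 6 + a 1 * a 5 * b 0 + (-1) * a 1 * a 5 * b 2 + a 1 * a 6 * b 0 + (-1) * a 1 * a 6 * b 4 + a 2 * a 3 * b 0 + (-1) * a 2 * a 3 * b 4 + a 2 * a 4 * b 0 + (-1) * a 2 * a 4 * b 3 + a 2 * a 5 * b 0 + (-1) * a 2 * a 5 * b 1 + a 2 * a 6 * b 0 + a 3 * a 4 * b 0 + (-1) * a 3 * a 4 * b 2 + a 3 * a 5 * b 0 + (-1) * a 3 * a 5 * b 6 + a 3 * a 6 * b 0 + (-1) * a 3 * a 6 * b 5 + a 4 * a 5 * b 0 + a 4 * a 6 * b 0 + (-1) * a 4 * a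 6 * b 1 + a 5 * a 6 * b 0 + (-1) * a 5 * a 6 * b 3) * h2
  have keyA1 : (a 0 * b 0 + a 1 * b 1 + a 2 * b 2 + a 3 * b 3 + a 4 * b 4 + a 5 * b 5 + a 6 * b 6) * a 1 + ((a 0 + a 1 + a 2 + a 3 + a 4 + a 5 + a 6) * (a 0 + a 1 + a 2 + a 3 + a 4 + a 5 + a 6)) * b 1 = 0 := by
    linear_combination (a 3) * hc0 + (a 4) * hc2 + (a 0) * hc3 + (a 2) * hc4 + (a 6) * hc5 + (a 5) * hc6 + (a 0 * a 1 * b 1 + a 0 * a 2 * b 1 + (-1) * a 0 * a 2 * b 5 + a 0 * a 3 * b 1 + a 0 * a 4 * b 1 + (-1) * a 0 * a 4 * b 6 + a 0 * a 5 * b 1 + (-1) * a 0 * a 5 * b 2 + a 0 * a 6 * b 1 + (-1) * a 0 * a 6 * b 4 + a 1 * a 1 * b 1 + a 1 * a 2 * b 1 + a 1 * a 3 * b 1 + a 1 * a 4 * b 1 + a 1 * a 5 * b 1 + a 1 * a 6 * b 1 + a 2 * a 3 * b 1 + (-1) * a 2 * a 3 * b 6 + a 2 * a 4 * b 1 + (-1)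 * a 2 * a 5 * b 0 + a 2 * a 5 * b 1 + a 2 * a 6 * b 1 + (-1) * a 2 * a 6 * b 3 + a 3 * a 4 * b 1 + (-1) * a 3 * a 4 * b 5 + a 3 * a 5 * b 1 + (-1) * a 3 * a 5 * b 4 + a 3 * a 6 * b 1 + (-1) * a 3 * a 6 * b 2 + a 4 * a 5 * b 1 + (-1) * a 4 * a 5 * b 3 + (-1) * a 4 * a 6 * b 0 + a 4 * a 6 * b 1 + a 5 * a 6 * b 1) * h2
  have keyA2 : (a 0 * b 0 + a 1 * b 1 + a 2 * b 2 + a 3 * b 3 + a 4 * b 4 + a 5 * b 5 + a 6 * b 6) * a 2 + ((a 0 + a 1 + a 2 + a 3 + a 4 + a 5 + a 6) * (a 0 + a 1 + a 2 + a 3 + a 4 + a 5 + a 6)) * b 2 = 0 := by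
    linear_combination (a 6) * hc0 + (a 4) * hc1 + (a 5) * hc3 + (a 1) * hc4 + (a 3) * hc5 + (a 0) * hc6 + (a 0 * a 1 * b 2 + (-1) * a 0 * a 1 * b 5 + a 0 * a 2 * b 2 + a 0 * a 3 * b 2 + (-1) * a 0 * a 3 * b 4 + a 0 * a 4 * b 2 + (-1) * a 0 * a 4 * b 3 + (-1) * a 0 * a 5 * b 1 + a 0 * a 5 * b 2 + a 0 * a 6 * b 2 + a 1 * a 2 * b 2 + a 1 * a 3 * b 2 + (-1) * a 1 * a 3 * b 6 + a 1 * a 4 * b 2 + (-1) * a 1 * a 5 * b 0 + a 1 * a 5 * b 2 + a 1 * a 6 * b 2 + (-1) * a 1 * a 6 * b 3 + a 2 * a 2 * b 2 + a 2 * a 3 * b 2 + a 2 * a 4 * b 2 + a 2 * a 5 * b 2 + a 2 * a 6 * b 2 + (-1) * a 3 * a 4 * b 0 + a 3 * a 4 * b 2 + a 3 * a 5 * b 2 + (-1) * a 3 * a 6 * b 1 + a 3 * a 6 * b 2 + a 4 * a 5 * b 2 + (-1) * a 4 * a 5 * b 6 + a 4 * a 6 * b 2 + (-1) * a 4 * a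 6 * b 5 + a 5 * a 6 * b 2 + (-1) * a 5 * a 6 * b 4) * h2
  have keyA3 : (a 0 * b 0 + a 1 * b 1 + a 2 * b 2 + a 3 * b 3 + a 4 * b 4 + a 5 * b 5 + a 6 * b 6) * a 3 + ((a 0 + a 1 + a 2 + a 3 + a 4 + a 5 + a 6) * (a 0 + a 1 + a 2 + a 3 + a 4 + a 5 + a 6)) * b 3 = 0 := by
    linear_combination (a 1) * hc0 + (a 0) * hc1 + (a 5) * hc2 + (a 6) * hc4 + (a 2) * hc5 + (a 4) * hc6 + (a 0 * a 1 * b 3 + a 0 * a 2 * b 3 + (-1) * a 0 * a 2 * b 4 + a 0 * a 3 * b 3 + (-1) * a 0 * a 4 * b 2 + a 0 * a 4 * b 3 + a 0 * a 5 * b 3 + (-1) * a 0 * a 5 * b 6 + a 0 * a 6 * b 3 + (-1) * a 0 * a 6 * b 5 + a 1 * a 2 * b 3 + (-1) * a 1 * a 2 * b 6 + a 1 * a 3 * b 3 + a 1 * a 4 * b 3 + (-1) * a 1 * a 4 * b 5 + a 1 * a 5 * b 3 + (-1) * a 1 * a 5 * b 4 + (-1) * a 1 * a 6 * b 2 + a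 1 * a 6 * b 3 + a 2 * a 3 * b 3 + (-1) * a 2 * a 4 * b 0 + a 2 * a 4 * b 3 + a 2 * a 5 * b 3 + (-1) * a 2 * a 6 * b 1 + a 2 * a 6 * b 3 + a 3 * a 3 * b 3 + a 3 * a 4 * b 3 + a 3 * a 5 * b 3 + a 3 * a 6 * b 3 + (-1) * a 4 * a 5 * b 1 + a 4 * a 5 * b 3 + a 4 * a 6 * b 3 + (-1) * a 5 * a 6 * b 0 + a 5 * a 6 * b 3) * h2
  have keyA4 : (a 0 * b 0 + a 1 * b 1 + a 2 * b 2 + a 3 * b 3 + a 4 * b 4 + a 5 * b 5 + a 6 * b 6) * a 4 + ((a 0 + a 1 + a 2 + a 3 + a 4 + a 5 + a 6) * (a 0 + a 1 + a 2 + a 3 + a 4 + a 5 + a 6)) * b 4 = 0 := by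
    linear_combination (a 5) * hc0 + (a 2) * hc1 + (a 1) * hc2 + (a 6) * hc3 + (a 0) * hc5 + (a 3) * hc6 + (a 0 * a 1 * b 4 + (-1) * a 0 * a 1 * b 6 + (-1) * a 0 * a 2 * b 3 + a 0 * a 2 * b 4 + (-1) * a 0 * a 3 * b 2 + a 0 * a 3 * b 4 + a 0 * a 4 * b 4 + a 0 * a 5 * b 4 + (-1) * a 0 * a 6 * b 1 + a 0 * a 6 * b 4 + a 1 * a 2 * b 4 + a 1 * a 3 * b 4 + (-1) * a 1 * a 3 * b 5 + a 1 * a 4 * b 4 + (-1) * a 1 * a 5 * b 3 + a 1 * a 5 * b 4 + (-1) * a 1 * a 6 * b 0 + a 1 * a 6 * b 4 + (-1) * a 2 * a 3 * b 0 + a 2 * a 3 * b 4 + a 2 * a 4 * b 4 + a 2 * a 5 * b 4 + (-1) * a 2 * a 5 * b 6 + a 2 * a 6 * b 4 + (-1) * a 2 * a 6 * b 5 + a 3 * a 4 * b 4 + (-1) * a 3 * a 5 * b 1 + a 3 * a 5 * b 4 + a 3 * a 6 * b 4 + a 4 * a 4 * b 4 + a 4 * a 5 * b 4 + a 4 * a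 6 * b 4 + (-1) * a 5 * a 6 * b 2 + a 5 * a 6 * b 4) * h2
  have keyA5 : (a 0 * b 0 + a 1 * b 1 + a 2 * b 2 + a 3 * b 3 + a 4 * b 4 + a 5 * b 5 + a 6 * b 6) * a 5 + ((a 0 + a 1 + a 2 + a 3 + a 4 + a 5 + a 6) * (a 0 + a 1 + a 2 + a 3 + a 4 + a 5 + a 6)) * b 5 = 0 := by
    linear_combination (a 4) * hc0 + (a 6) * hc1 + (a 3) * hc2 + (a 2) * hc3 + (a 0) * hc4 + (a 1) * hc6 + ((-1) * a 0 * a 1 * b 2 + a 0 * a 1 * b 5 + (-1) * a 0 * a 2 * b 1 + a 0 * a 2 * b 5 + a 0 * a 3 * b 5 + (-1) * a 0 * a 3 * b 6 + a 0 * a 4 * b 5 + a 0 * a 5 * b 5 + (-1) * a 0 * a 6 * b 3 + a 0 * a 6 * b 5 + (-1) * a 1 * a 2 * b 0 + a 1 * a 2 * b 5 + (-1) * a 1 * a 3 * b 4 + a 1 * a 3 * b 5 + (-1) * a 1 * a 4 * b 3 + a 1 * a 4 * b 5 + a 1 * a 5 * b 5 + a 1 * a 6 * b 5 + a 2 * a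 3 * b 5 + a 2 * a 4 * b 5 + (-1) * a 2 * a 4 * b 6 + a 2 * a 5 * b 5 + (-1) * a 2 * a 6 * b 4 + a 2 * a 6 * b 5 + (-1) * a 3 * a 4 * b 1 + a 3 * a 4 * b 5 + a 3 * a 5 * b 5 + (-1) * a 3 * a 6 * b 0 + a 3 * a 6 * b 5 + a 4 * a 5 * b 5 + (-1) * a 4 * a 6 * b 2 + a 4 * a 6 * b 5 + a 5 * a 5 * b 5 + a 5 * a 6 * b 5) * h2
  have keyA6 : (a 0 * b 0 + a 1 * b 1 + a 2 * b 2 + a 3 * b 3 + a 4 * b 4 + a 5 * b 5 + a 6 * b 6) * a 6 + ((a 0 + a 1 + a 2 + a 3 + a 4 + a 5 + a 6) * (a 0 + a 1 + a 2 + a 3 + a 4 + a 5 + a 6)) * b 6 = 0 := by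
    linear_combination (a 2) * hc0 + (a 5) * hc1 + (a 0) * hc2 + (a 4) * hc3 + (a 3) * hc4 + (a 1) * hc5 + ((-1) * a 0 * a 1 * b 4 + a 0 * a 1 * b 6 + a 0 * a 2 * b 6 + (-1) * a 0 * a 3 * b 5 + a 0 * a 3 * b 6 + (-1) * a 0 * a 4 * b 1 + a 0 * a 4 * b 6 + (-1) * a 0 * a 5 * b 3 + a 0 * a 5 * b 6 + a 0 * a 6 * b 6 + (-1) * a 1 * a 2 * b 3 + a 1 * a 2 * b 6 + (-1) * a 1 * a 3 * b 2 + a 1 * a 3 * b 6 + (-1) * a 1 * a 4 * b 0 + a 1 * a 4 * b 6 + a 1 * a 5 * b 6 + a 1 * a 6 * b 6 + (-1) * a 2 * a 3 * b 1 + a 2 * a 3 * b 6 + (-1) * a 2 * a 4 * b 5 + a 2 * a 4 * b 6 + (-1) * a 2 * a 5 * b 4 + a 2 * a 5 * b 6 + a 2 * a 6 * b 6 + a 3 * a 4 * b 6 + (-1) * a 3 * a 5 * b 0 + a 3 * a 5 * b 6 + a 3 * a 6 * b 6 + (-1) * a 4 * a 5 * b 2 + a 4 * a 5 * b 6 + a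 4 * a 6 * b 6 + a 5 * a 6 * b 6 + a 6 * a 6 * b 6) * h2
  have keyB0 : ((b 0 + b 1 + b 2 + b 3 + b 4 + b 5 + b 6) * (b 0 + b 1 + b 2 + b 3 + b 4 + b 5 + b 6)) * a 0 + (a 0 * b 0 + a 1 * b 1 + a 2 * b 2 + a 3 * b 3 + a 4 * b 4 + a 5 * b 5 + a 6 * b 6) * b 0 = 0 := by
    linear_combination (b 3) * hc1 + (b 6) * hc2 + (b 1) * hc3 + (b 5) * hc4 + (b 4) * hc5 + (b 2) * hc6 + (a 0 * b 0 * b 0 + a 0 * b 0 * b 1 + a 0 * b 0 * b 2 + a 0 * b 0 * b 3 + a 0 * b 0 * b 4 + a 0 * b 0 * b 5 + a 0 * b 0 * b 6 + a 0 * b 1 * b 2 + a 0 * b 1 * b 3 + a 0 * b 1 * b 4 + a 0 * b 1 * b 5 + a 0 * b 1 * b 6 + a 0 * b 2 * b 3 + a 0 * b 2 * b 4 + a 0 * b 2 * b 5 + a 0 * b 2 * b 6 + a 0 * b 3 * b 4 + a 0 * b 3 * b 5 + a 0 * b 3 * b 6 + a 0 * b 4 * b 5 + a 0 * b 4 * b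 6 + a 0 * b 5 * b 6 + (-1) * a 1 * b 2 * b 5 + (-1) * a 1 * b 4 * b 6 + (-1) * a 2 * b 1 * b 5 + (-1) * a 2 * b 3 * b 4 + (-1) * a 3 * b 2 * b 4 + (-1) * a 3 * b 5 * b 6 + (-1) * a 4 * b 1 * b 6 + (-1) * a 4 * b 2 * b 3 + (-1) * a 5 * b 1 * b 2 + (-1) * a 5 * b 3 * b 6 + (-1) * a 6 * b 1 * b 4 + (-1) * a 6 * b 3 * b 5) * h2
  have keyB1 : ((b 0 + b 1 + b 2 + b 3 + b 4 + b 5 + b 6) * (b 0 + b 1 + b 2 + b 3 + b 4 + b 5 + b 6)) * a 1 + (a 0 * b 0 + a 1 * b 1 + a 2 * b 2 + a 3 * b 3 + a 4 * b 4 + a 5 * b 5 + a 6 * b 6) * b 1 = 0 := by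
    linear_combination (b 3) * hc0 + (b 4) * hc2 + (b 0) * hc3 + (b 2) * hc4 + (b 6) * hc5 + (b 5) * hc6 + ((-1) * a 0 * b 2 * b 5 + (-1) * a 0 * b 4 * b 6 + a 1 * b 0 * b 1 + a 1 * b 0 * b 2 + a 1 * b 0 * b 3 + a 1 * b 0 * b 4 + a 1 * b 0 * b 5 + a 1 * b 0 * b 6 + a 1 * b 1 * b 1 + a 1 * b 1 * b 2 + a 1 * b 1 * b 3 + a 1 * b 1 * b 4 + a 1 * b 1 * b 5 + a 1 * b 1 * b 6 + a 1 * b 2 * b 3 + a 1 * b 2 * b 4 + a 1 * b 2 * b 5 + a 1 * b 2 * b 6 + a 1 * b 3 * b 4 + a 1 * b 3 * b 5 + a 1 * b 3 * b 6 + a 1 * b 4 * b 5 + a 1 * b 4 * b 6 + a 1 * b 5 * b 6 + (-1) * a 2 * b 0 * b 5 + (-1) * a 2 * b 3 * b 6 + (-1) * a 3 * b 2 * b 6 + (-1) * a 3 * b 4 * b 5 + (-1) * a 4 * b 0 * b 6 + (-1) * a 4 * b 3 * b 5 + (-1) * a 5 * b 0 * b 2 + (-1) * a 5 * b 3 * b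 4 + (-1) * a 6 * b 0 * b 4 + (-1) * a 6 * b 2 * b 3) * h2
  have keyB2 : ((b 0 + b 1 + b 2 + b 3 + b 4 + b 5 + b 6) * (b 0 + b 1 + b 2 + b 3 + b 4 + b 5 + b 6)) * a 2 + (a 0 * b 0 + a 1 * b 1 + a 2 * b 2 + a 3 * b 3 + a 4 * b 4 + a 5 * b 5 + a 6 * b 6) * b 2 = 0 := by
    linear_combination (b 6) * hc0 + (b 4) * hc1 + (b 5) * hc3 + (b 1) * hc4 + (b 3) * hc5 + (b 0) * hc6 + ((-1) * a 0 * b 1 * b 5 + (-1) * a 0 * b 3 * b 4 + (-1) * a 1 * b 0 * b 5 + (-1) * a 1 * b 3 * b 6 + a 2 * b 0 * b 1 + a 2 * b 0 * b 2 + a 2 * b 0 * b 3 + a 2 * b 0 * b 4 + a 2 * b 0 * b 5 + a 2 * b 0 * b 6 + a 2 * b 1 * b 2 + a 2 * b 1 * b 3 + a 2 * b 1 * b 4 + a 2 * b 1 * b 5 + a 2 * b 1 * b 6 + a 2 * b 2 * b 2 + a 2 * b 2 * b 3 + a 2 * b 2 * b 4 + a 2 * b 2 * b 5 + a 2 * b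 2 * b 6 + a 2 * b 3 * b 4 + a 2 * b 3 * b 5 + a 2 * b 3 * b 6 + a 2 * b 4 * b 5 + a 2 * b 4 * b 6 + a 2 * b 5 * b 6 + (-1) * a 3 * b 0 * b 4 + (-1) * a 3 * b 1 * b 6 + (-1) * a 4 * b 0 * b 3 + (-1) * a 4 * b 5 * b 6 + (-1) * a 5 * b 0 * b 1 + (-1) * a 5 * b 4 * b 6 + (-1) * a 6 * b 1 * b 3 + (-1) * a 6 * b 4 * b 5) * h2
  have keyB3 : ((b 0 + b 1 + b 2 + b 3 + b 4 + b 5 + b 6) * (b 0 + b 1 + b 2 + b 3 + b 4 + b 5 + b 6)) * a 3 + (a 0 * b 0 + a 1 * b 1 + a 2 * b 2 + a 3 * b 3 + a 4 * b 4 + a 5 * b 5 + a 6 * b 6) * b 3 = 0 := by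
    linear_combination (b 1) * hc0 + (b 0) * hc1 + (b 5) * hc2 + (b 6) * hc4 + (b 2) * hc5 + (b 4) * hc6 + ((-1) * a 0 * b 2 * b 4 + (-1) * a 0 * b 5 * b 6 + (-1) * a 1 * b 2 * b 6 + (-1) * a 1 * b 4 * b 5 + (-1) * a 2 * b 0 * b 4 + (-1) * a 2 * b 1 * b 6 + a 3 * b 0 * b 1 + a 3 * b 0 * b 2 + a 3 * b 0 * b 3 + a 3 * b 0 * b 4 + a 3 * b 0 * b 5 + a 3 * b 0 * b 6 + a 3 * b 1 * b 2 + a 3 * b 1 * b 3 + a 3 * b 1 * b 4 + a 3 * b 1 * b 5 + a 3 * b 1 * b 6 + a 3 * b 2 * b 3 + a 3 * b 2 * b 4 + a 3 * b 2 * b 5 + a 3 * b 2 * b 6 + a 3 * b 3 * b 3 + a 3 * b 3 * b 4 + a 3 * b 3 * b 5 + a 3 * b 3 * b 6 + a 3 * b 4 * b 5 + a 3 * b 4 * b 6 + a 3 * b 5 * b 6 + (-1) * a 4 * b 0 * b 2 + (-1) * a 4 * b 1 * b 5 + (-1) * a 5 * b 0 * b 6 + (-1) * a 5 * b 1 * b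 4 + (-1) * a 6 * b 0 * b 5 + (-1) * a 6 * b 1 * b 2) * h2
  have keyB4 : ((b 0 + b 1 + b 2 + b 3 + b 4 + b 5 + b 6) * (b 0 + b 1 + b 2 + b 3 + b 4 + b 5 + b 6)) * a 4 + (a 0 * b 0 + a 1 * b 1 + a 2 * b 2 + a 3 * b 3 + a 4 * b 4 + a 5 * b 5 + a 6 * b 6) * b 4 = 0 := by
    linear_combination (b 5) * hc0 + (b 2) * hc1 + (b 1) * hc2 + (b 6) * hc3 + (b 0) * hc5 + (b 3) * hc6 + ((-1) * a 0 * b 1 * b 6 + (-1) * a 0 * b 2 * b 3 + (-1) * a 1 * b 0 * b 6 + (-1) * a 1 * b 3 * b 5 + (-1) * a 2 * b 0 * b 3 + (-1) * a 2 * b 5 * b 6 + (-1) * a 3 * b 0 * b 2 + (-1) * a 3 * b 1 * b 5 + a 4 * b 0 * b 1 + a 4 * b 0 * b 2 + a 4 * b 0 * b 3 + a 4 * b 0 * b 4 + a 4 * b 0 * b 5 + a 4 * b 0 * b 6 + a 4 * b 1 * b 2 + a 4 * b 1 * b 3 + a 4 * b 1 * b 4 + a 4 * b 1 * b 5 + a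 4 * b 1 * b 6 + a 4 * b 2 * b 3 + a 4 * b 2 * b 4 + a 4 * b 2 * b 5 + a 4 * b 2 * b 6 + a 4 * b 3 * b 4 + a 4 * b 3 * b 5 + a 4 * b 3 * b 6 + a 4 * b 4 * b 4 + a 4 * b 4 * b 5 + a 4 * b 4 * b 6 + a 4 * b 5 * b 6 + (-1) * a 5 * b 1 * b 3 + (-1) * a 5 * b 2 * b 6 + (-1) * a 6 * b 0 * b 1 + (-1) * a 6 * b 2 * b 5) * h2
  have keyB5 : ((b 0 + b 1 + b 2 + b 3 + b 4 + b 5 + b 6) * (b 0 + b 1 + b 2 + b 3 + b 4 + b 5 + b 6)) * a 5 + (a 0 * b 0 + a 1 * b 1 + a 2 * b 2 + a 3 * b 3 + a 4 * b 4 + a 5 * b 5 + a 6 * b 6) * b 5 = 0 := by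
    linear_combination (b 4) * hc0 + (b 6) * hc1 + (b 3) * hc2 + (b 2) * hc3 + (b 0) * hc4 + (b 1) * hc6 + ((-1) * a 0 * b 1 * b 2 + (-1) * a 0 * b 3 * b 6 + (-1) * a 1 * b 0 * b 2 + (-1) * a 1 * b 3 * b 4 + (-1) * a 2 * b 0 * b 1 + (-1) * a 2 * b 4 * b 6 + (-1) * a 3 * b 0 * b 6 + (-1) * a 3 * b 1 * b 4 + (-1) * a 4 * b 1 * b 3 + (-1) * a 4 * b 2 * b 6 + a 5 * b 0 * b 1 + a 5 * b 0 * b 2 + a 5 * b 0 * b 3 + a 5 * b 0 * b 4 + a 5 * b 0 * b 5 + a 5 * b 0 * b 6 + a 5 * b 1 * b 2 + a 5 * b 1 * b 3 + a 5 * b 1 * b 4 + a 5 * b 1 * b 5 + a 5 * b 1 * b 6 + a 5 * b 2 * b 3 + a 5 * b 2 * b 4 + a 5 * b 2 * b 5 + a 5 * b 2 * b 6 + a 5 * b 3 * b 4 + a 5 * b 3 * b 5 + a 5 * b 3 * b 6 + a 5 * b 4 * b 5 + a 5 * b 4 * b 6 + a 5 * b 5 * b 5 + a 5 * b 5 * b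 6 + (-1) * a 6 * b 0 * b 3 + (-1) * a 6 * b 2 * b 4) * h2
  have keyB6 : ((b 0 + b 1 + b 2 + b 3 + b 4 + b 5 + b 6) * (b 0 + b 1 + b 2 + b 3 + b 4 + b 5 + b 6)) * a 6 + (a 0 * b 0 + a 1 * b 1 + a 2 * b 2 + a 3 * b 3 + a 4 * b 4 + a 5 * b 5 + a 6 * b 6) * b 6 = 0 := by
    linear_combination (b 2) * hc0 + (b 5) * hc1 + (b 0) * hc2 + (b 4) * hc3 + (b 3) * hc4 + (b 1) * hc5 + ((-1) * a 0 * b 1 * b 4 + (-1) * a 0 * b 3 * b 5 + (-1) * a 1 * b 0 * b 4 + (-1) * a 1 * b 2 * b 3 + (-1) * a 2 * b 1 * b 3 + (-1) * a 2 * b 4 * b 5 + (-1) * a 3 * b 0 * b 5 + (-1) * a 3 * b 1 * b 2 + (-1) * a 4 * b 0 * b 1 + (-1) * a 4 * b 2 * b 5 + (-1) * a 5 * b 0 * b 3 + (-1) * a 5 * b 2 * b 4 + a 6 * b 0 * b 1 + a 6 * b 0 * b 2 + a 6 * b 0 * b 3 + a 6 * b 0 * b 4 + a 6 * b 0 * b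 5 + a 6 * b 0 * b 6 + a 6 * b 1 * b 2 + a 6 * b 1 * b 3 + a 6 * b 1 * b 4 + a 6 * b 1 * b 5 + a 6 * b 1 * b 6 + a 6 * b 2 * b 3 + a 6 * b 2 * b 4 + a 6 * b 2 * b 5 + a 6 * b 2 * b 6 + a 6 * b 3 * b 4 + a 6 * b 3 * b 5 + a 6 * b 3 * b 6 + a 6 * b 4 * b 5 + a 6 * b 4 * b 6 + a 6 * b 5 * b 6 + a 6 * b 6 * b 6) * h2
  have hAv : (∑ i, a i * b i) • a + ((∑ i, a i) * (∑ i, a i)) • b = 0 := by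
    funext m
    simp only [Pi.add_apply, Pi.smul_apply, Pi.zero_apply, smul_eq_mul, Fin.sum_univ_seven]
    fin_cases m
    · exact keyA0
    · exact keyA1
    · exact keyA2
    · exact keyA3
    · exact keyA4
    · exact keyA5
    · exact keyA6
  have hBv : ((∑ i, b i) * (∑ i, b i)) • a + (∑ i, a i * b i) • b = 0 := by
    funext m
    simp only [Pi.add_apply, Pi.smul_apply, Pi.zero_apply, smul_eq_mul, Fin.sum_univ_seven]
    fin_cases m
    · exact keyB0
    · exact keyB1
    · exact keyB2
    · exact keyB3
    · exact keyB4
    · exact keyB5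
    · exact keyB6
  obtain ⟨-, hSa⟩ := LinearIndependent.pair_iff.mp hind _ _ hAv
  obtain ⟨hSb, -⟩ := LinearIndependent.pair_iff.mp hind _ _ hBv
  exact ⟨mul_self_eq_zero.mp hSa, mul_self_eq_zero.mp hSb⟩
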